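/- If a connected graph G has a vertex partition V(G) = A ∪ B such that G[A] is a complete graph on k vertices and G[B] is an isometric subgraph of G, then the dual mutual-visibility number of G is at least k. -/

import Mathlib

open SimpleGraph

/-- `u` and `v` are `X`-visible in `G`: there is a shortest `u,v`-walk whose
vertices meet `X` only possibly in `u` and `v`. -/
def IsMVisible {V : Type*} (G : SimpleGraph V) (X : Set V) (u v : V) : Prop :=
  ∃ P : G.Walk u v, P.length = G.dist u v ∧
    ∀ w ∈ P.support, w ∈ X → w = u ∨ w = v

/-- mutual-visibility set -/
def IsMVSet {V : Type*} (G : SimpleGraph V) (X : Set V) : Prop :=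
  ∀ u ∈ X, ∀ v ∈ X, IsMVisible G X u v

/-- outer mutual-visibility set -/
def IsOuterMVSet {V : Type*} (G : SimpleGraph V) (X : Set V) : Prop :=
  ∀ u ∈ X, ∀ v : V, IsMVisible G X u v

/-- dual mutual-visibility set -/
def IsDualMVSet {V : Type*} (G : SimpleGraph V) (X : Set V) : Prop :=
  (∀ u ∈ X, ∀ v ∈ X, IsMVisible G X u v) ∧
  (∀ u ∉ X, ∀ v ∉ X, IsMVisible G X u v)

/-- total mutual-visibility set -/
def IsTotalMVSet {V : Type*} (G : SimpleGraph V) (X : Set V) : Prop :=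
  ∀ u v : V, IsMVisible G X u v

/-- the mutual-visibility number μ(G) -/
noncomputable def mu {V : Type*} (G : SimpleGraph V) : ℕ :=
  sSup {n | ∃ X : Set V, IsMVSet G X ∧ X.ncard = n}

/-- the outer mutual-visibility number μₒ(G) -/
noncomputable def muO {V : Type*} (G : SimpleGraph V) : ℕ :=
  sSup {n | ∃ X : Set V, IsOuterMVSet G X ∧ X.ncard = n}

/-- the dual mutual-visibility number μ_d(G) -/
noncomputable def muD {V : Type*} (G : SimpleGraph V) : ℕ :=
  sSup {n | ∃ X : Set V, IsDualMVSet G X ∧ X.ncard = n}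

/-- the total mutual-visibility number μ_t(G) -/
noncomputable def muT {V : Type*} (G : SimpleGraph V) : ℕ :=
  sSup {n | ∃ X : Set V, IsTotalMVSet G X ∧ X.ncard = n}

theorem stmt_1 {V : Type*} [Fintype V] (G : SimpleGraph V) (hG : G.Connected)
    (A B : Set V) (k : ℕ)
    (hUnion : A ∪ B = Set.univ) (hdisj : Disjoint A B)
    (hA : A.ncard = k)
    (hcomplete : ∀ u ∈ A, ∀ v ∈ A, u ≠ v → G.Adj u v)
    (hiso : ∀ u v : B, (G.induce B).dist u v = G.dist u v) :
    k ≤ muD G := by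
  classical
  have hmem : k ∈ {n | ∃ X : Set V, IsDualMVSet G X ∧ X.ncard = n} := by
    refine ⟨A, ⟨?_, ?_⟩, hA⟩
    · intro u hu v hv
      by_cases huv : u = v
      · subst huv
        exact ⟨Walk.nil, by simp [SimpleGraph.dist_self], by simp⟩
      · have hadj := hcomplete u hu v hv huv
        refine ⟨Walk.cons hadj Walk.nil, ?_, ?_⟩
        · simp [SimpleGraph.dist_eq_one_iff_adj.mpr hadj]
        · intro w hw _
          simp only [Walk.support_cons, Walk.support_nil, List.mem_cons,
            List.mem_singleton] at hw
          tauto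
    · intro u hu v hv
      have huB : u ∈ B := by
        have := hUnion ▸ Set.mem_univ u
        rcases this with h | h
        · exact absurd h hu
        · exact h
      have hvB : v ∈ B := by
        have := hUnion ▸ Set.mem_univ v
        rcases this with h | h
        · exact absurd h hv
        · exact h
      by_cases huv : u = v
      · subst huv
        exact ⟨Walk.nil, by simp [SimpleGraph.dist_self], by simp⟩
      · have h0 : (G.induce B).dist ⟨u, huB⟩ ⟨v, hvB⟩ = G.dist u v := hiso ⟨u, huB⟩ ⟨v, hvB⟩
        have hne : (G.induce B).dist ⟨u, huB⟩ ⟨v, hvB⟩ ≠ 0 := by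
          rw [h0]
          exact (hG.pos_dist_of_ne huv).ne'
        obtain ⟨P, hP⟩ := exists_walk_of_dist_ne_zero hne
        refine ⟨P.map (SimpleGraph.Embedding.induce B).toHom, ?_, ?_⟩
        · exact (Walk.length_map _ _).trans (hP.trans h0)
        · intro w hw hwA
          exfalso
          replace hw := List.mem_map.mp (Eq.mp (congrArg (w ∈ ·) (Walk.support_map _ P)) hw)
          obtain ⟨x, -, rfl⟩ := hw
          exact (hdisj.ne_of_mem hwA x.2) rfl
  have hbdd : BddAbove {n | ∃ X : Set V, IsDualMVSet G X ∧ X.ncard = n} := by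
    refine ⟨Fintype.card V, fun n hn => ?_⟩
    obtain ⟨X, -, rfl⟩ := hn
    calc X.ncard ≤ (Set.univ : Set V).ncard := Set.ncard_le_ncard (Set.subset_univ X)
      _ = Fintype.card V := by rw [Set.ncard_univ, Nat.card_eq_fintype_card]
  exact le_csSup hbdd hmem
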